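/- Let H be a real Hilbert space, r ≥ 2 an integer, and let g, f₁, …, f_{r−1} ∈ H be nonzero vectors such that the coherence of every pair of distinct vectors among {g, f₁, …, f_{r−1}} is at most δ, where δ ∈ [0, 1] satisfies (r − 1)δ < 1. Let M := span{f₁, …, f_{r−1}} and let P_M denote the orthogonal projection onto M. Then ‖g − P_M(g)‖² / ‖g‖² ≥ 1 − (r − 1)δ² / (1 − (r − 2)δ). -/

import Mathlib

open MeasureTheory RealInnerProductSpace Finset

set_option maxHeartbeats 1000000 in
theorem stmt5 {H : Type*} [NormedAddCommGroup H] [InnerProductSpace ℝ H] [CompleteSpace H]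
    {r : ℕ} (hr : 2 ≤ r) (g : H) (f : Fin (r - 1) → H)
    (hg : g ≠ 0) (hf : ∀ i, f i ≠ 0)
    (δ : ℝ) (hδ0 : 0 ≤ δ) (hδ1 : δ ≤ 1) (hδr : ((r : ℝ) - 1) * δ < 1)
    (hcoh1 : ∀ i, |⟪g, f i⟫| / (‖g‖ * ‖f i‖) ≤ δ)
    (hcoh2 : ∀ i j, i ≠ j → |⟪f i, f j⟫| / (‖f i‖ * ‖f j‖) ≤ δ)
    (M : Submodule ℝ H) [FiniteDimensional ℝ M]
    (hM : M = Submodule.span ℝ (Set.range f)) :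
    1 - ((r : ℝ) - 1) * δ ^ 2 / (1 - ((r : ℝ) - 2) * δ)
      ≤ ‖g - (Submodule.orthogonalProjection M g : H)‖ ^ 2 / ‖g‖ ^ 2 := by
  have hr1 : 1 ≤ r := by omega
  have hncast : ((r - 1 : ℕ) : ℝ) = (r : ℝ) - 1 := by
    push_cast [Nat.cast_sub hr1]; ring
  have hr2 : (2:ℝ) ≤ (r:ℝ) := by exact_mod_cast hr
  have hnpos : (0:ℝ) < ((r-1 : ℕ) : ℝ) := by rw [hncast]; linarith
  have hgpos : (0:ℝ) < ‖g‖ := norm_pos_iff.2 hg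
  have hfpos : ∀ i, (0:ℝ) < ‖f i‖ := fun i => norm_pos_iff.2 (hf i)
  have hc1 : ∀ i, |⟪g, f i⟫| ≤ δ * (‖g‖ * ‖f i‖) := by
    intro i
    have h := hcoh1 i
    rw [div_le_iff₀ (mul_pos hgpos (hfpos i))] at h
    linarith
  have hc2 : ∀ i j, i ≠ j → |⟪f i, f j⟫| ≤ δ * (‖f i‖ * ‖f j‖) := by
    intro i j hij
    have h := hcoh2 i j hij
    rw [div_le_iff₀ (mul_pos (hfpos i) (hfpos j))] at h
    linarith
  set p : H := (Submodule.orthogonalProjection M g : H) with hp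
  have hpM : p ∈ M := (Submodule.orthogonalProjection M g).2
  obtain ⟨c, hc⟩ : ∃ c : Fin (r-1) → ℝ, ∑ i, c i • f i = p := by
    rw [hM] at hpM
    exact (Submodule.mem_span_range_iff_exists_fun ℝ).1 hpM
  set a : Fin (r-1) → ℝ := fun i => |c i| * ‖f i‖ with ha
  set s : ℝ := ∑ i, a i with hs
  set t : ℝ := ‖p‖ ^ 2 with ht
  have ht0 : 0 ≤ t := by positivity
  have hs0 : 0 ≤ s := Finset.sum_nonneg fun i _ => by positivity
  have horth : ⟪g - p, p⟫ = 0 := Submodule.starProjection_inner_eq_zero (K := M) g p hpM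
  have hgp : ⟪g, p⟫ = t := by
    have h := inner_sub_left (𝕜 := ℝ) g p p
    rw [horth] at h
    rw [ht, ← real_inner_self_eq_norm_sq]
    linarith
  -- Step 2: t ≤ δ * ‖g‖ * s
  have step2 : t ≤ δ * ‖g‖ * s := by
    rw [← hgp, ← hc, inner_sum]
    simp only [real_inner_smul_right]
    rw [hs, Finset.mul_sum]
    refine Finset.sum_le_sum fun i _ => ?_
    calc c i * ⟪g, f i⟫ ≤ |c i * ⟪g, f i⟫| := le_abs_self _
      _ = |c i| * |⟪g, f i⟫| := abs_mul _ _
      _ ≤ |c i| * (δ * (‖g‖ * ‖f i‖)) := mul_le_mul_of_nonneg_left (hc1 i) (abs_nonneg _)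
      _ = δ * ‖g‖ * (|c i| * ‖f i‖) := by ring
  set A : ℝ := ∑ i, a i ^ 2 with hA
  have hts : t = ∑ i, ∑ j, c i * c j * ⟪f i, f j⟫ := by
    rw [ht, ← real_inner_self_eq_norm_sq, ← hc, sum_inner]
    refine Finset.sum_congr rfl fun i _ => ?_
    rw [inner_sum]
    refine Finset.sum_congr rfl fun j _ => ?_
    rw [real_inner_smul_left, real_inner_smul_right]; ring
  -- Step 3 lower bound for t
  have step3 : A + δ * A - δ * s ^ 2 ≤ t := by
    rw [hts]
    have key : ∀ i : Fin (r-1),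
        a i ^ 2 + δ * a i ^ 2 - δ * (a i * s) ≤ ∑ j, c i * c j * ⟪f i, f j⟫ := by
      intro i
      rw [← Finset.univ.add_sum_erase (fun j => c i * c j * ⟪f i, f j⟫) (Finset.mem_univ i)]
      have hdiag : c i * c i * ⟪f i, f i⟫ = a i ^ 2 := by
        rw [real_inner_self_eq_norm_sq]
        simp only [ha]
        rw [mul_pow, sq_abs]
        ring
      have hterm : ∀ j ∈ Finset.univ.erase i, -(δ * a i * a j) ≤ c i * c j * ⟪f i, f j⟫ := by
        intro j hj
        have hij : i ≠ j := (Finset.mem_erase.1 hj).1.symm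
        have h1 : -|c i * c j * ⟪f i, f j⟫| ≤ c i * c j * ⟪f i, f j⟫ := neg_abs_le _
        have h2 : |c i * c j * ⟪f i, f j⟫| ≤ δ * a i * a j := by
          rw [abs_mul, abs_mul]
          calc |c i| * |c j| * |⟪f i, f j⟫|
              ≤ |c i| * |c j| * (δ * (‖f i‖ * ‖f j‖)) :=
                mul_le_mul_of_nonneg_left (hc2 i j hij) (by positivity)
            _ = δ * a i * a j := by simp only [ha]; ring
        linarith
      have hoff : -(δ * a i * (s - a i)) ≤ ∑ j ∈ Finset.univ.erase i, c i * c j * ⟪f i, f j⟫ := by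
        have h3 : ∑ j ∈ Finset.univ.erase i, -(δ * a i * a j) = -(δ * a i * (s - a i)) := by
          rw [Finset.sum_neg_distrib]
          congr 1
          rw [← Finset.mul_sum, Finset.sum_erase_eq_sub (Finset.mem_univ i), ← hs]
        rw [← h3]
        exact Finset.sum_le_sum hterm
      nlinarith [hdiag, hoff]
    have e1 : ∑ i, δ * a i ^ 2 = δ * A := by rw [hA, Finset.mul_sum]
    have e2 : ∑ i, δ * (a i * s) = δ * s ^ 2 := by
      rw [Finset.sum_congr rfl (fun i _ => by ring : ∀ i ∈ Finset.univ, δ * (a i * s) = δ * s * a i),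
        ← Finset.mul_sum, ← hs]
      ring
    calc A + δ * A - δ * s ^ 2
        = ∑ i, (a i ^ 2 + δ * a i ^ 2 - δ * (a i * s)) := by
          rw [Finset.sum_sub_distrib, Finset.sum_add_distrib, e1, e2, ← hA]
      _ ≤ ∑ i, ∑ j, c i * c j * ⟪f i, f j⟫ := Finset.sum_le_sum fun i _ => key i
  -- Cauchy-Schwarz
  have hcs : s ^ 2 ≤ ((r-1 : ℕ) : ℝ) * A := by
    have h := sq_sum_le_card_mul_sum_sq (s := (Finset.univ : Finset (Fin (r-1)))) (f := a)
    simpa [hs, hA] using h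
  set cp : ℝ := 1 - ((r : ℝ) - 2) * δ with hcp
  have hcppos : 0 < cp := by rw [hcp]; nlinarith
  have step5 : cp * s ^ 2 ≤ ((r-1:ℕ):ℝ) * t := by
    have h1 : (1 + δ) * s ^ 2 ≤ (1 + δ) * (((r-1:ℕ):ℝ) * A) :=
      mul_le_mul_of_nonneg_left hcs (by linarith)
    have h2 : ((r-1:ℕ):ℝ) * ((1 + δ) * A - δ * s ^ 2) ≤ ((r-1:ℕ):ℝ) * t :=
      mul_le_mul_of_nonneg_left (by linarith [step3]) (le_of_lt hnpos)
    have h3 : cp = 1 + δ - ((r-1:ℕ):ℝ) * δ := by rw [hcp, hncast]; ring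
    rw [h3]
    nlinarith [h1, h2]
  have step6 : cp * t ≤ ((r-1:ℕ):ℝ) * δ ^ 2 * ‖g‖ ^ 2 := by
    rcases eq_or_lt_of_le ht0 with h | h
    · rw [← h, mul_zero]
      positivity
    · have hsq2 : t * t ≤ δ ^ 2 * ‖g‖ ^ 2 * s ^ 2 := by
        have hh := mul_le_mul step2 step2 ht0 (mul_nonneg (mul_nonneg hδ0 hgpos.le) hs0)
        calc t * t ≤ δ * ‖g‖ * s * (δ * ‖g‖ * s) := hh
          _ = δ ^ 2 * ‖g‖ ^ 2 * s ^ 2 := by ring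
      have h5 : cp * t * t ≤ ((r-1:ℕ):ℝ) * δ ^ 2 * ‖g‖ ^ 2 * t := by
        have h4a : cp * (t * t) ≤ cp * (δ ^ 2 * ‖g‖ ^ 2 * s ^ 2) :=
          mul_le_mul_of_nonneg_left hsq2 hcppos.le
        have h4b : δ ^ 2 * ‖g‖ ^ 2 * (cp * s ^ 2) ≤ δ ^ 2 * ‖g‖ ^ 2 * (((r-1:ℕ):ℝ) * t) :=
          mul_le_mul_of_nonneg_left step5 (by positivity)
        linarith [h4a, h4b]
      exact le_of_mul_le_mul_right h5 h
  -- Pythagoras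
  have hpyth : ‖g - p‖ ^ 2 = ‖g‖ ^ 2 - t := by
    have h := norm_add_sq_real (g - p) p
    rw [sub_add_cancel, horth] at h
    rw [ht]; linarith
  rw [hpyth]
  have hg2 : (0:ℝ) < ‖g‖ ^ 2 := by positivity
  rw [le_div_iff₀ hg2]
  have h6 : t ≤ ((r:ℝ) - 1) * δ ^ 2 / cp * ‖g‖ ^ 2 := by
    rw [div_mul_eq_mul_div, le_div_iff₀ hcppos]
    rw [hncast] at step6
    linarith [step6]
  have h7 : (1 - ((r:ℝ) - 1) * δ ^ 2 / cp) * ‖g‖ ^ 2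
      = ‖g‖ ^ 2 - ((r:ℝ) - 1) * δ ^ 2 / cp * ‖g‖ ^ 2 := by ring
  linarith
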